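/- For every ŵ in the reference shape space P̂ = P₂(K̂) + span{ξ₁³, ξ₂³} of the two-dimensional rectangular Morley element and for each i ∈ {1, 2}, the orthogonality relation ∫_{K̂} ∂(ŵ − Îŵ)/∂ξᵢ dξ₁dξ₂ = 0 holds. -/

import Mathlib

open MeasureTheory

/-- Partial derivative in the first variable of a curried function on `ℝ²`. -/
noncomputable def pdx (f : ℝ → ℝ → ℝ) : ℝ → ℝ → ℝ := fun x y => deriv (fun t => f t y) x

/-- Partial derivative in the second variable of a curried function on `ℝ²`. -/
noncomputable def pdy (f : ℝ → ℝ → ℝ) : ℝ → ℝ → ℝ := fun x y => deriv (fun t => f x t) y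

/-- Membership in the shape space `P(K) = P₂(K) + span{x₁³, x₂³}` of the two-dimensional
rectangular Morley element. -/
def MorleyShape2 (w : ℝ → ℝ → ℝ) : Prop :=
  ∃ c0 c1 c2 c3 c4 c5 c6 c7 : ℝ, ∀ x y : ℝ,
    w x y = c0 + c1 * x + c2 * y + c3 * x ^ 2 + c4 * (x * y) + c5 * y ^ 2
      + c6 * x ^ 3 + c7 * y ^ 3

/-- The bilinear (Q₁) interpolation operator on the reference square `[-1,1]²`:
the unique element of `span{1, ξ₁, ξ₂, ξ₁ξ₂}` agreeing with `w` at the four vertices. -/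
noncomputable def Ihat (w : ℝ → ℝ → ℝ) : ℝ → ℝ → ℝ := fun x y =>
  (w 1 1 * ((1 + x) * (1 + y)) + w 1 (-1) * ((1 + x) * (1 - y))
    + w (-1) 1 * ((1 - x) * (1 + y)) + w (-1) (-1) * ((1 - x) * (1 - y))) / 4

/-- Derivative of the 1D error profile `t ↦ a*(t^2-1) + b*(t^3-t) + k`. -/
lemma err_hasDerivAt (a b k x : ℝ) :
    HasDerivAt (fun t : ℝ => a * (t ^ 2 - 1) + b * (t ^ 3 - t) + k)
      (a * (2 * x) + b * (3 * x ^ 2 - 1)) x := by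
  have h1 : HasDerivAt (fun t : ℝ => t ^ 2 - 1) (2 * x) x := by
    simpa using ((hasDerivAt_pow 2 x).sub_const 1)
  have h2 : HasDerivAt (fun t : ℝ => t ^ 3 - t) (3 * x ^ 2 - 1) x := by
    simpa [Pi.sub_def] using ((hasDerivAt_pow 3 x).sub (hasDerivAt_id x))
  exact ((h1.const_mul a).add (h2.const_mul b)).add_const k

/-- Antiderivative used for the outer integral. -/
lemma antideriv_hasDerivAt (a b x : ℝ) :
    HasDerivAt (fun t : ℝ => a * t ^ 2 + b * (t ^ 3 - t))
      (2 * (a * (2 * x) + b * (3 * x ^ 2 - 1)) / 2) x := by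
  have h1 : HasDerivAt (fun t : ℝ => t ^ 2) (2 * x) x := by
    simpa using hasDerivAt_pow 2 x
  have h2 : HasDerivAt (fun t : ℝ => t ^ 3 - t) (3 * x ^ 2 - 1) x := by
    simpa [Pi.sub_def] using ((hasDerivAt_pow 3 x).sub (hasDerivAt_id x))
  have : HasDerivAt (fun t : ℝ => a * t ^ 2 + b * (t ^ 3 - t)) (a * (2 * x) + b * (3 * x ^ 2 - 1)) x :=
    (h1.const_mul a).add (h2.const_mul b)
  convert this using 1
  ring

/-- Orthogonality of the gradient of the bilinear interpolation error on the reference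
square, for functions in the reference Morley shape space. -/
theorem stmt_2 (w : ℝ → ℝ → ℝ) (hw : MorleyShape2 w) :
    (∫ x in (-1:ℝ)..1, ∫ y in (-1:ℝ)..1,
        pdx (fun a b => w a b - Ihat w a b) x y) = 0 ∧
    (∫ x in (-1:ℝ)..1, ∫ y in (-1:ℝ)..1,
        pdy (fun a b => w a b - Ihat w a b) x y) = 0 := by
  obtain ⟨c0, c1, c2, c3, c4, c5, c6, c7, hc⟩ := hw
  have hE : ∀ x y : ℝ, w x y - Ihat w x y
      = c3 * (x ^ 2 - 1) + c6 * (x ^ 3 - x) + (c5 * (y ^ 2 - 1) + c7 * (y ^ 3 - y)) := by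
    intro x y
    simp only [Ihat, hc]
    ring
  have hpdx : ∀ x y : ℝ, pdx (fun a b => w a b - Ihat w a b) x y
      = c3 * (2 * x) + c6 * (3 * x ^ 2 - 1) := by
    intro x y
    have hfun : (fun t => w t y - Ihat w t y)
        = fun t : ℝ => c3 * (t ^ 2 - 1) + c6 * (t ^ 3 - t)
            + (c5 * (y ^ 2 - 1) + c7 * (y ^ 3 - y)) := by
      funext t; exact hE t y
    simp only [pdx, hfun]
    exact (err_hasDerivAt c3 c6 _ x).deriv
  have hpdy : ∀ x y : ℝ, pdy (fun a b => w a b - Ihat w a b) x y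
      = c5 * (2 * y) + c7 * (3 * y ^ 2 - 1) := by
    intro x y
    have hfun : (fun t => w x t - Ihat w x t)
        = fun t : ℝ => c5 * (t ^ 2 - 1) + c7 * (t ^ 3 - t)
            + (c3 * (x ^ 2 - 1) + c6 * (x ^ 3 - x)) := by
      funext t; rw [hE x t]; ring
    simp only [pdy, hfun]
    exact (err_hasDerivAt c5 c7 _ y).deriv
  constructor
  · have : (∫ x in (-1:ℝ)..1, ∫ y in (-1:ℝ)..1,
        pdx (fun a b => w a b - Ihat w a b) x y)
        = ∫ x in (-1:ℝ)..1, 2 * (c3 * (2 * x) + c6 * (3 * x ^ 2 - 1)) / 2 * 2 := by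
      apply intervalIntegral.integral_congr
      intro x _
      simp only [hpdx, intervalIntegral.integral_const, smul_eq_mul]
      ring
    rw [this]
    have key : (∫ x in (-1:ℝ)..1, 2 * (c3 * (2 * x) + c6 * (3 * x ^ 2 - 1)) / 2)
        = (fun t : ℝ => c3 * t ^ 2 + c6 * (t ^ 3 - t)) 1
          - (fun t : ℝ => c3 * t ^ 2 + c6 * (t ^ 3 - t)) (-1) := by
      exact intervalIntegral.integral_eq_sub_of_hasDerivAt
        (fun x _ => antideriv_hasDerivAt c3 c6 x)
        (by apply Continuous.intervalIntegrable; continuity)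
    rw [intervalIntegral.integral_mul_const, key]
    norm_num
  · have : (∫ x in (-1:ℝ)..1, ∫ y in (-1:ℝ)..1,
        pdy (fun a b => w a b - Ihat w a b) x y)
        = ∫ x in (-1:ℝ)..1, (0:ℝ) := by
      apply intervalIntegral.integral_congr
      intro x _
      dsimp only
      have hinner : (∫ y in (-1:ℝ)..1, pdy (fun a b => w a b - Ihat w a b) x y)
          = (fun t : ℝ => c5 * t ^ 2 + c7 * (t ^ 3 - t)) 1
            - (fun t : ℝ => c5 * t ^ 2 + c7 * (t ^ 3 - t)) (-1) := by
        have hcong : (∫ y in (-1:ℝ)..1, pdy (fun a b => w a b - Ihat w a b) x y)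
            = ∫ y in (-1:ℝ)..1, 2 * (c5 * (2 * y) + c7 * (3 * y ^ 2 - 1)) / 2 := by
          apply intervalIntegral.integral_congr
          intro y _
          rw [hpdy]; ring
        rw [hcong]
        exact intervalIntegral.integral_eq_sub_of_hasDerivAt
          (fun y _ => antideriv_hasDerivAt c5 c7 y)
          (by apply Continuous.intervalIntegrable; continuity)
      rw [hinner]
      norm_num
    rw [this]
    simp
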